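/- Consider the Drinfeld module of rank r over C_∞ with T e = θ e + a_1 τ e + ⋯ + a_{r−1} τ^{r−1} e + τ^r e, and its associated matrix 𝔓 = Q^t τ − I_r for the basis (e, τe, …, τ^{r−1}e). Setting y_{r−1} = ∑_i x_i T^i, elimination of y_0,…,y_{r−2} from the system Y^{(1)} Q = Y yields, for every i ≥ 1, the single affine equation θ^{q^{r−1}} x_i^{q^r} + a_1^{q^{r−2}} x_i^{q^{r−1}} + a_2^{q^{r−3}} x_i^{q^{r−2}} + ⋯ + a_{r−1} x_i^{q} + x_i − x_{i−1}^{q^r} = 0, and for i = 0 the same equation without the term −x_{−1}^{q^r}. -/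

import Mathlib

/-- The coefficientwise `q`-power Frobenius on `K[[T]]`. -/
noncomputable def sigma {K : Type*} [CommSemiring K] (q : ℕ) (X : PowerSeries K) :
    PowerSeries K :=
  PowerSeries.mk fun i => (PowerSeries.coeff i X) ^ q

lemma coeff_sigma' {K : Type*} [CommSemiring K] (q i : ℕ) (f : PowerSeries K) :
    PowerSeries.coeff i (sigma q f) = (PowerSeries.coeff i f) ^ q := by
  simp [sigma]

lemma coeff_sigma_iter {K : Type*} [CommSemiring K] (q m i : ℕ) (f : PowerSeries K) :
    PowerSeries.coeff i ((sigma q)^[m] f) = (PowerSeries.coeff i f) ^ q ^ m := by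
  induction m generalizing f with
  | zero => simp
  | succ m ih =>
      rw [Function.iterate_succ_apply, ih, coeff_sigma', ← pow_mul, mul_comm, ← pow_succ]

lemma sigma_eq_map {p : ℕ} (n : ℕ) [Fact p.Prime] {K : Type*} [CommRing K] [CharP K p]
    (f : PowerSeries K) :
    sigma (p ^ n) f = PowerSeries.map (iterateFrobenius K p n) f := by
  ext i
  simp [sigma, PowerSeries.coeff_map, iterateFrobenius_def]

lemma sigma_iter_eq_map {p : ℕ} (n : ℕ) [Fact p.Prime] {K : Type*} [CommRing K] [CharP K p]
    (m : ℕ) (f : PowerSeries K) :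
    (sigma (p ^ n))^[m] f = PowerSeries.map (iterateFrobenius K p (n * m)) f := by
  ext i
  simp [coeff_sigma_iter, PowerSeries.coeff_map, iterateFrobenius_def, pow_mul]

lemma sigma_iter_add {p : ℕ} (n : ℕ) [Fact p.Prime] {K : Type*} [CommRing K] [CharP K p]
    (m : ℕ) (f g : PowerSeries K) :
    (sigma (p ^ n))^[m] (f + g) = (sigma (p ^ n))^[m] f + (sigma (p ^ n))^[m] g := by
  simp [sigma_iter_eq_map]

lemma sigma_iter_sub {p : ℕ} (n : ℕ) [Fact p.Prime] {K : Type*} [CommRing K] [CharP K p]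
    (m : ℕ) (f g : PowerSeries K) :
    (sigma (p ^ n))^[m] (f - g) = (sigma (p ^ n))^[m] f - (sigma (p ^ n))^[m] g := by
  simp [sigma_iter_eq_map]

lemma sigma_iter_mul {p : ℕ} (n : ℕ) [Fact p.Prime] {K : Type*} [CommRing K] [CharP K p]
    (m : ℕ) (f g : PowerSeries K) :
    (sigma (p ^ n))^[m] (f * g) = (sigma (p ^ n))^[m] f * (sigma (p ^ n))^[m] g := by
  simp [sigma_iter_eq_map]

lemma sigma_iter_C {p : ℕ} (n : ℕ) [Fact p.Prime] {K : Type*} [CommRing K] [CharP K p]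
    (m : ℕ) (c : K) :
    (sigma (p ^ n))^[m] (PowerSeries.C c) = PowerSeries.C (c ^ (p ^ n) ^ m) := by
  rw [sigma_iter_eq_map, PowerSeries.map_C, iterateFrobenius_def, pow_mul]

lemma sigma_iter_X {p : ℕ} (n : ℕ) [Fact p.Prime] {K : Type*} [CommRing K] [CharP K p]
    (m : ℕ) :
    (sigma (p ^ n))^[m] (PowerSeries.X : PowerSeries K) = PowerSeries.X := by
  rw [sigma_iter_eq_map, PowerSeries.map_X]

/-- Elimination for a rank-`r` Drinfeld module: if `Y = (y_0, …, y_{r-1})`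
satisfies the system `Y^{(1)} Q = Y`, i.e. `(T−θ) y_{r-1}^{(1)} = y_0` and
`−a_j y_{r-1}^{(1)} + y_{j-1}^{(1)} = y_j` for `1 ≤ j ≤ r−1`, and
`y_{r-1} = ∑ x_i T^i`, then for all `i ≥ 1`
`θ^{q^{r-1}} x_i^{q^r} + ∑_{j=1}^{r-1} a_j^{q^{r-1-j}} x_i^{q^{r-j}} + x_i − x_{i-1}^{q^r} = 0`,
and for `i = 0` the same equation without the last term. -/
theorem stmt12 {p n q : ℕ} [Fact p.Prime] (hn : 0 < n) (hq : q = p ^ n)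
    {K : Type*} [Field K] [CharP K p] [IsAlgClosed K]
    (θ : K) (r : ℕ) (hr : 1 ≤ r) (a : ℕ → K)
    (Y : ℕ → PowerSeries K)
    (h0 : (PowerSeries.X - PowerSeries.C θ) * sigma q (Y (r - 1)) = Y 0)
    (hj : ∀ j, 1 ≤ j → j ≤ r - 1 →
      -(PowerSeries.C (a j)) * sigma q (Y (r - 1)) + sigma q (Y (j - 1)) = Y j) :
    let x : ℕ → K := fun i => PowerSeries.coeff i (Y (r - 1))
    (∀ i, 1 ≤ i →
      θ ^ q ^ (r - 1) * (x i) ^ q ^ r +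
      (∑ j ∈ Finset.Icc 1 (r - 1), (a j) ^ q ^ (r - 1 - j) * (x i) ^ q ^ (r - j)) +
      x i - (x (i - 1)) ^ q ^ r = 0) ∧
    (θ ^ q ^ (r - 1) * (x 0) ^ q ^ r +
      (∑ j ∈ Finset.Icc 1 (r - 1), (a j) ^ q ^ (r - 1 - j) * (x 0) ^ q ^ (r - j)) +
      x 0 = 0) := by
  subst hq
  intro x
  set q := p ^ n with hq
  have hx : ∀ i, x i = PowerSeries.coeff i (Y (r - 1)) := fun _ => rfl
  -- the key elimination identity, by induction
  have key : ∀ k, k ≤ r - 1 →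
      (sigma q)^[k] (Y (r - 1 - k)) =
        Y (r - 1) + ∑ m ∈ Finset.Icc 1 k,
          PowerSeries.C ((a (r - m)) ^ q ^ (m - 1)) * (sigma q)^[m] (Y (r - 1)) := by
    intro k
    induction k with
    | zero => intro _; simp
    | succ k ih =>
        intro hk
        have ihk := ih (by omega)
        have e := hj (r - 1 - k) (by omega) (by omega)
        have e2 : r - 1 - k - 1 = r - 1 - (k + 1) := by omega
        rw [e2] at e
        have e3 : sigma q (Y (r - 1 - (k + 1))) =
            Y (r - 1 - k) + PowerSeries.C (a (r - 1 - k)) * sigma q (Y (r - 1)) := by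
          rw [← e]; ring
        have e5 : (sigma q)^[k + 1] (Y (r - 1 - (k + 1))) =
            (sigma q)^[k] (Y (r - 1 - k)) +
              PowerSeries.C ((a (r - 1 - k)) ^ q ^ k) * (sigma q)^[k + 1] (Y (r - 1)) := by
          rw [Function.iterate_succ_apply, e3, sigma_iter_add n, sigma_iter_mul n,
            sigma_iter_C n, ← Function.iterate_succ_apply]
        rw [e5, ihk, Finset.sum_Icc_succ_top (by omega : 1 ≤ k + 1)]
        have hrk : r - 1 - k = r - (k + 1) := by omega
        rw [hrk]
        simp only [Nat.add_sub_cancel]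
        ring
  have hk := key (r - 1) le_rfl
  rw [Nat.sub_self] at hk
  have h0' : (sigma q)^[r - 1] (Y 0) =
      (PowerSeries.X - PowerSeries.C (θ ^ q ^ (r - 1))) * (sigma q)^[r] (Y (r - 1)) := by
    rw [← h0, sigma_iter_mul n, sigma_iter_sub n, sigma_iter_X n, sigma_iter_C n,
      ← Function.iterate_succ_apply]
    have h1 : r - 1 + 1 = r := by omega
    simp only [Nat.succ_eq_add_one, h1, hq]
  rw [h0'] at hk
  -- hk : (X - C θ^{q^{r-1}}) * S^[r] y = Y (r-1) + ∑ ...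
  -- reindex the goal sums
  have sumre : ∀ z : K,
      (∑ j ∈ Finset.Icc 1 (r - 1), (a j) ^ q ^ (r - 1 - j) * z ^ q ^ (r - j)) =
        ∑ m ∈ Finset.Icc 1 (r - 1), (a (r - m)) ^ q ^ (m - 1) * z ^ q ^ m := by
    intro z
    refine Finset.sum_nbij' (fun j => r - j) (fun m => r - m) ?_ ?_ ?_ ?_ ?_ <;>
      · intro t ht
        simp only [Finset.mem_Icc] at ht ⊢
        first
          | omega
          | (have h1 : r - (r - t) = t := by omega
             have h2 : r - t - 1 = r - 1 - t := by omega
             rw [h1, h2])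
  -- coefficientwise consequences
  have coeffeq : ∀ i : ℕ,
      PowerSeries.coeff i (PowerSeries.X * (sigma q)^[r] (Y (r - 1))) -
        θ ^ q ^ (r - 1) * (x i) ^ q ^ r =
      x i + ∑ m ∈ Finset.Icc 1 (r - 1), (a (r - m)) ^ q ^ (m - 1) * (x i) ^ q ^ m := by
    intro i
    have := congrArg (PowerSeries.coeff i) hk
    rw [sub_mul, map_sub, map_add, PowerSeries.coeff_C_mul, coeff_sigma_iter] at this
    rw [map_sum] at this
    simp only [PowerSeries.coeff_C_mul, coeff_sigma_iter] at this
    rw [← hx] at this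
    exact this
  constructor
  · intro i hi
    obtain ⟨t, rfl⟩ : ∃ t, i = t + 1 := ⟨i - 1, by omega⟩
    have h := coeffeq (t + 1)
    rw [PowerSeries.coeff_succ_X_mul, coeff_sigma_iter, ← hx] at h
    rw [sumre]
    simp only [Nat.add_sub_cancel]
    linear_combination -h
  · have h := coeffeq 0
    have hz : PowerSeries.coeff 0 (PowerSeries.X * (sigma q)^[r] (Y (r - 1))) = 0 := by
      rw [PowerSeries.coeff_zero_eq_constantCoeff, map_mul, PowerSeries.constantCoeff_X,
        zero_mul]
    rw [hz] at h
    rw [sumre]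
    linear_combination -h
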